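/- Suppose C(t) is nonempty and convex for every t ∈ [0,T]. If x and y are solutions of the sweeping process (P) with initial values x₀ ∈ C(0) and y₀ ∈ C(0) respectively, then for every t ∈ [0,T]: ⟨A₀(x(t) − y(t)), x(t) − y(t)⟩ ≤ ⟨A₀(x₀ − y₀), x₀ − y₀⟩. -/

import Mathlib

open MeasureTheory Set
open scoped RealInnerProductSpace

/-- `u` (with Bochner-integrable derivative `v`) is a solution of the sweeping process (P)
with velocity constraint `C`, data `A₀, A₁, f`, and initial value `u₀` on `[0,T]`. -/
def SweepSol {H : Type*} [NormedAddCommGroup H] [InnerProductSpace ℝ H]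
    (T : ℝ) (A₀ A₁ : H →L[ℝ] H) (f : ℝ → H) (C : ℝ → Set H)
    (u₀ : H) (u v : ℝ → H) : Prop :=
  IntegrableOn v (Icc 0 T) ∧
  (∀ t ∈ Icc (0:ℝ) T, u t = u₀ + ∫ τ in (0:ℝ)..t, v τ) ∧
  (∀ᵐ t ∂(volume.restrict (Icc (0:ℝ) T)),
    v t ∈ C t ∧ ∀ z ∈ C t, 0 ≤ ⟪A₁ (v t) + A₀ (u t) - f t, z - v t⟫)

lemma key_identity {H : Type*} [NormedAddCommGroup H] [InnerProductSpace ℝ H] [CompleteSpace H]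
    (A : H →L[ℝ] H) (hsym : ∀ a b : H, ⟪A a, b⟫ = ⟪a, A b⟫)
    (t : ℝ) (ht : 0 ≤ t) (h : ℝ → H) (hint : IntegrableOn h (Ioc 0 t)) :
    ⟪A (∫ τ in (0:ℝ)..t, h τ), ∫ τ in (0:ℝ)..t, h τ⟫
      = 2 * ∫ τ in (0:ℝ)..t, ⟪A (∫ σ in (0:ℝ)..τ, h σ), h τ⟫ := by
  have symm' : ∀ a b : H, ⟪A a, b⟫ = ⟪A b, a⟫ := fun a b => by
    rw [hsym, real_inner_comm]
  set k : ℝ → H := (Ioc 0 t).indicator h with hk_def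
  have hk : Integrable k volume := by
    rw [hk_def]
    exact (integrable_indicator_iff measurableSet_Ioc).mpr hint
  have hAk : Integrable (fun σ => A (k σ)) volume := A.integrable_comp hk
  -- the interval integral equals the full integral of k
  have hPk : (∫ τ in (0:ℝ)..t, h τ) = ∫ τ, k τ := by
    rw [intervalIntegral.integral_of_le ht, hk_def, integral_indicator measurableSet_Ioc]
  set P : H := ∫ τ, k τ with hP_def
  -- integrability of the kernel on the product
  have hKm : AEStronglyMeasurable (fun p : ℝ × ℝ => ⟪A (k p.1), k p.2⟫)
      (volume.prod volume) := by
    exact (hAk.aestronglyMeasurable.comp_fst).inner (hk.aestronglyMeasurable.comp_snd)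
  have hKint : Integrable (fun p : ℝ × ℝ => ⟪A (k p.1), k p.2⟫) (volume.prod volume) := by
    have hb : Integrable (fun p : ℝ × ℝ => (‖A‖ * ‖k p.1‖) * ‖k p.2‖) (volume.prod volume) :=
      (hk.norm.const_mul ‖A‖).mul_prod hk.norm
    refine hb.mono' hKm ?_
    refine Filter.Eventually.of_forall fun p => ?_
    calc ‖⟪A (k p.1), k p.2⟫‖ ≤ ‖A (k p.1)‖ * ‖k p.2‖ := norm_inner_le_norm _ _
      _ ≤ (‖A‖ * ‖k p.1‖) * ‖k p.2‖ :=
        mul_le_mul_of_nonneg_right (A.le_opNorm _) (norm_nonneg _)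
  -- Step 1: double integral of the full kernel is ⟪A P, P⟫
  have step1 : (∫ p : ℝ × ℝ, ⟪A (k p.1), k p.2⟫ ∂(volume.prod volume)) = ⟪A P, P⟫ := by
    rw [MeasureTheory.integral_prod _ hKint]
    have h1 : ∀ σ : ℝ, (∫ τ, ⟪A (k σ), k τ⟫) = ⟪A (k σ), P⟫ := fun σ =>
      integral_inner hk (A (k σ))
    simp_rw [h1]
    have h2 : ∀ σ : ℝ, ⟪A (k σ), P⟫ = ⟪A P, k σ⟫ := fun σ => symm' _ _
    simp_rw [h2]
    exact integral_inner hk (A P)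
  -- lower and strict-upper triangular kernels
  set Kle : ℝ × ℝ → ℝ := fun p => if p.2 ≤ p.1 then ⟪A (k p.1), k p.2⟫ else 0 with hKle_def
  set Klt : ℝ × ℝ → ℝ := fun p => if p.1 < p.2 then ⟪A (k p.1), k p.2⟫ else 0 with hKlt_def
  have hle_meas : MeasurableSet {p : ℝ × ℝ | p.2 ≤ p.1} :=
    (isClosed_le continuous_snd continuous_fst).measurableSet
  have hlt_meas : MeasurableSet {p : ℝ × ℝ | p.1 < p.2} :=
    (isOpen_lt continuous_fst continuous_snd).measurableSet
  have hKle_eq : Kle = {p : ℝ × ℝ | p.2 ≤ p.1}.indicator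
      (fun p => ⟪A (k p.1), k p.2⟫) := by
    funext p; by_cases hp : p.2 ≤ p.1 <;> simp [hKle_def, hp, Set.indicator_apply]
  have hKlt_eq : Klt = {p : ℝ × ℝ | p.1 < p.2}.indicator
      (fun p => ⟪A (k p.1), k p.2⟫) := by
    funext p; by_cases hp : p.1 < p.2 <;> simp [hKlt_def, hp, Set.indicator_apply]
  have hKleint : Integrable Kle (volume.prod volume) := by
    rw [hKle_eq]; exact hKint.indicator hle_meas
  have hKltint : Integrable Klt (volume.prod volume) := by
    rw [hKlt_eq]; exact hKint.indicator hlt_meas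
  -- split
  have hsplit : (∫ p : ℝ × ℝ, ⟪A (k p.1), k p.2⟫ ∂(volume.prod volume))
      = (∫ p, Kle p ∂(volume.prod volume)) + ∫ p, Klt p ∂(volume.prod volume) := by
    rw [← integral_add hKleint hKltint]
    refine integral_congr_ae (Filter.Eventually.of_forall fun p => ?_)
    by_cases hp : p.2 ≤ p.1
    · simp [hKle_def, hKlt_def, hp, not_lt.mpr hp]
    · simp [hKle_def, hKlt_def, hp, lt_of_not_ge hp]
  -- swap: ∫ Klt = ∫ Kle
  have hswap : (∫ p, Klt p ∂(volume.prod volume)) = ∫ p, Kle p ∂(volume.prod volume) := by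
    rw [MeasureTheory.integral_prod _ hKltint, MeasureTheory.integral_prod _ hKleint]
    rw [MeasureTheory.integral_integral_swap (f := fun σ τ => Klt (σ, τ)) hKltint]
    -- now LHS = ∫ τ, ∫ σ, Klt (σ, τ) dσ dτ ; rename and use symmetry
    have : ∀ τ : ℝ, (∫ σ, Klt (σ, τ)) = ∫ σ, Kle (τ, σ) := by
      intro τ
      have h1 : (fun σ => Klt (σ, τ)) =ᵐ[volume] fun σ => Kle (τ, σ) := by
        have hτ : (volume : Measure ℝ) {τ} = 0 := measure_singleton τ
        rw [Filter.eventuallyEq_iff_exists_mem]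
        refine ⟨{τ}ᶜ, ?_, fun σ hσ => ?_⟩
        · rw [mem_ae_iff, compl_compl]; exact hτ
        · have hστ : σ ≠ τ := hσ
          by_cases hc : σ < τ
          · simp only [hKlt_def, hKle_def, if_pos hc, if_pos hc.le]
            exact symm' _ _
          · have : ¬ σ ≤ τ := fun hle => hc (lt_of_le_of_ne hle hστ)
            simp [hKlt_def, hKle_def, hc, this]
      exact integral_congr_ae h1
    simp_rw [this]
  -- lower-triangular integral in terms of the primitive
  have hW : ∀ σ ∈ Ioc (0:ℝ) t, (∫ τ in Iic σ, k τ) = ∫ τ in (0:ℝ)..σ, h τ := by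
    intro σ hσ
    rw [hk_def, setIntegral_indicator measurableSet_Ioc,
      intervalIntegral.integral_of_le hσ.1.le]
    congr 1
    rw [Set.Iic_inter_Ioc_of_le hσ.2]
  have hstep4 : (∫ p, Kle p ∂(volume.prod volume))
      = ∫ σ in (0:ℝ)..t, ⟪A (∫ τ in (0:ℝ)..σ, h τ), h σ⟫ := by
    rw [MeasureTheory.integral_prod _ hKleint]
    have h1 : ∀ σ : ℝ, (∫ τ, Kle (σ, τ)) = ⟪A (k σ), ∫ τ in Iic σ, k τ⟫ := by
      intro σ
      have : (fun τ => Kle (σ, τ)) = (Iic σ).indicator (fun τ => ⟪A (k σ), k τ⟫) := by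
        funext τ; by_cases hτ : τ ≤ σ <;>
          simp [hKle_def, hτ, Set.indicator_apply, mem_Iic]
      rw [this, integral_indicator measurableSet_Iic]
      exact integral_inner (hk.integrableOn) (A (k σ))
    simp_rw [h1]
    have h2 : (fun σ => ⟪A (k σ), ∫ τ in Iic σ, k τ⟫)
        = (Ioc 0 t).indicator (fun σ => ⟪A (∫ τ in (0:ℝ)..σ, h τ), h σ⟫) := by
      funext σ
      by_cases hσ : σ ∈ Ioc (0:ℝ) t
      · rw [Set.indicator_of_mem hσ, hW σ hσ]
        have : k σ = h σ := Set.indicator_of_mem hσ h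
        rw [this, symm']
      · rw [Set.indicator_of_notMem hσ]
        have : k σ = 0 := Set.indicator_of_notMem hσ h
        simp [this]
    rw [h2, integral_indicator measurableSet_Ioc,
      intervalIntegral.integral_of_le ht]
  rw [hPk, ← step1, hsplit, hswap, hstep4]
  ring

theorem quadratic_form_monotone_along_solutions
    {H : Type*} [NormedAddCommGroup H] [InnerProductSpace ℝ H] [CompleteSpace H]
    (T : ℝ) (hT : 0 < T) (A₀ A₁ : H →L[ℝ] H)
    (hA₀sym : ∀ x y : H, ⟪A₀ x, y⟫ = ⟪x, A₀ y⟫)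
    (hA₁sym : ∀ x y : H, ⟪A₁ x, y⟫ = ⟪x, A₁ y⟫)
    (hA₀pos : ∀ x : H, 0 ≤ ⟪A₀ x, x⟫)
    (hA₁pos : ∀ x : H, 0 ≤ ⟪A₁ x, x⟫)
    (f : ℝ → H) (hf : ContinuousOn f (Icc 0 T))
    (C : ℝ → Set H)
    (hC : ∀ t ∈ Icc (0:ℝ) T, (C t).Nonempty ∧ Convex ℝ (C t))
    (x₀ y₀ : H) (hx₀ : x₀ ∈ C 0) (hy₀ : y₀ ∈ C 0)
    (x y vx vy : ℝ → H)
    (hx : SweepSol T A₀ A₁ f C x₀ x vx)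
    (hy : SweepSol T A₀ A₁ f C y₀ y vy) :
    ∀ t ∈ Icc (0:ℝ) T,
      ⟪A₀ (x t - y t), x t - y t⟫ ≤ ⟪A₀ (x₀ - y₀), x₀ - y₀⟫ := by
  have symm' : ∀ a b : H, ⟪A₀ a, b⟫ = ⟪A₀ b, a⟫ := fun a b => by
    rw [hA₀sym, real_inner_comm]
  set w0 : H := x₀ - y₀ with hw0_def
  set h : ℝ → H := fun τ => vx τ - vy τ with hh_def
  have hhT : IntegrableOn h (Icc 0 T) := hx.1.sub hy.1
  -- a.e. dissipativity estimate
  have hae : ∀ᵐ τ ∂(volume.restrict (Icc (0:ℝ) T)),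
      ⟪A₀ (x τ - y τ), h τ⟫ ≤ 0 := by
    filter_upwards [hx.2.2, hy.2.2] with τ hxτ hyτ
    have h1 : 0 ≤ ⟪A₁ (vx τ) + A₀ (x τ) - f τ, vy τ - vx τ⟫ := hxτ.2 (vy τ) hyτ.1
    have h2 : 0 ≤ ⟪A₁ (vy τ) + A₀ (y τ) - f τ, vx τ - vy τ⟫ := hyτ.2 (vx τ) hxτ.1
    have hkey : ⟪A₁ (vx τ) + A₀ (x τ) - f τ, vy τ - vx τ⟫
        + ⟪A₁ (vy τ) + A₀ (y τ) - f τ, vx τ - vy τ⟫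
        = -(⟪A₁ (vx τ - vy τ), vx τ - vy τ⟫ + ⟪A₀ (x τ - y τ), vx τ - vy τ⟫) := by
      simp only [map_sub, inner_sub_left, inner_sub_right, inner_add_left]
      ring
    have hpos := hA₁pos (vx τ - vy τ)
    have : ⟪A₀ (x τ - y τ), vx τ - vy τ⟫ ≤ 0 := by
      have := add_nonneg h1 h2
      rw [hkey] at this
      linarith
    simpa [hh_def] using this
  intro t htmem
  have ht0 : (0:ℝ) ≤ t := htmem.1
  have htT : t ≤ T := htmem.2
  have hsub : Ioc (0:ℝ) t ⊆ Icc (0:ℝ) T := fun τ hτ => ⟨hτ.1.le, hτ.2.trans htT⟩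
  have hsubcc : Icc (0:ℝ) t ⊆ Icc (0:ℝ) T := Icc_subset_Icc le_rfl htT
  have hhint : IntegrableOn h (Ioc 0 t) := hhT.mono_set hsub
  have hhIcc : IntegrableOn h (Icc 0 t) := hhT.mono_set hsubcc
  set W : ℝ → H := fun σ => ∫ τ in (0:ℝ)..σ, h τ with hW_def
  -- representation of the difference
  have hrep : ∀ τ ∈ Icc (0:ℝ) t, x τ - y τ = w0 + W τ := by
    intro τ hτ
    have hτT : τ ∈ Icc (0:ℝ) T := hsubcc hτ
    have hix : IntervalIntegrable vx volume 0 τ := by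
      rw [intervalIntegrable_iff_integrableOn_Ioc_of_le hτ.1]
      exact hx.1.mono_set fun σ hσ => ⟨hσ.1.le, hσ.2.trans hτT.2⟩
    have hiy : IntervalIntegrable vy volume 0 τ := by
      rw [intervalIntegrable_iff_integrableOn_Ioc_of_le hτ.1]
      exact hy.1.mono_set fun σ hσ => ⟨hσ.1.le, hσ.2.trans hτT.2⟩
    rw [hx.2.1 τ hτT, hy.2.1 τ hτT, hW_def, hw0_def]
    simp only [hh_def]
    rw [intervalIntegral.integral_sub hix hiy]
    abel
  have hWcont : ContinuousOn W (Icc 0 t) := by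
    have h1 : ContinuousOn (fun σ => ∫ τ in Ioc (0:ℝ) σ, h τ) (Icc 0 t) :=
      intervalIntegral.continuousOn_primitive hhIcc
    refine (continuousOn_congr ?_).mpr h1
    intro σ hσ
    show (∫ τ in (0:ℝ)..σ, h τ) = ∫ τ in Ioc (0:ℝ) σ, h τ
    rw [intervalIntegral.integral_of_le hσ.1]
  -- integrability of the two integrands
  have ia : IntervalIntegrable (fun τ => ⟪A₀ w0, h τ⟫) volume 0 t := by
    rw [intervalIntegrable_iff_integrableOn_Ioc_of_le ht0]
    exact (innerSL ℝ (A₀ w0)).integrable_comp hhint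
  have ib : IntervalIntegrable (fun τ => ⟪A₀ (W τ), h τ⟫) volume 0 t := by
    rw [intervalIntegrable_iff_integrableOn_Ioc_of_le ht0]
    have hAWcont : ContinuousOn (fun σ => A₀ (W σ)) (Icc 0 t) :=
      A₀.continuous.comp_continuousOn hWcont
    obtain ⟨M, hM⟩ := (isCompact_Icc (a := (0:ℝ)) (b := t)).exists_bound_of_continuousOn hAWcont
    have hmeas : AEStronglyMeasurable (fun τ => ⟪A₀ (W τ), h τ⟫)
        (volume.restrict (Ioc 0 t)) := by
      refine AEStronglyMeasurable.inner ?_ hhint.aestronglyMeasurable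
      exact ((hAWcont.mono Ioc_subset_Icc_self).aestronglyMeasurable measurableSet_Ioc)
    refine (hhint.norm.const_mul M).mono' hmeas ?_
    refine (ae_restrict_iff' measurableSet_Ioc).mpr (Filter.Eventually.of_forall fun τ hτ => ?_)
    calc ‖⟪A₀ (W τ), h τ⟫‖ ≤ ‖A₀ (W τ)‖ * ‖h τ‖ := norm_inner_le_norm _ _
      _ ≤ M * ‖h τ‖ :=
        mul_le_mul_of_nonneg_right (hM τ (Ioc_subset_Icc_self hτ)) (norm_nonneg _)
  set P : H := W t with hP_def
  -- the quadratic expansion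
  have hexp : ⟪A₀ (w0 + P), w0 + P⟫
      = ⟪A₀ w0, w0⟫ + 2 * ⟪A₀ w0, P⟫ + ⟪A₀ P, P⟫ := by
    have hc : ⟪A₀ P, w0⟫ = ⟪A₀ w0, P⟫ := symm' _ _
    simp only [map_add, inner_add_left, inner_add_right]
    rw [hc]; ring
  -- the cross term
  have hcross : (∫ τ in (0:ℝ)..t, ⟪A₀ w0, h τ⟫) = ⟪A₀ w0, P⟫ := by
    have h1 : P = ∫ τ in Ioc (0:ℝ) t, h τ := by
      rw [show P = ∫ τ in (0:ℝ)..t, h τ from rfl, intervalIntegral.integral_of_le ht0]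
    rw [intervalIntegral.integral_of_le ht0, h1]
    exact integral_inner hhint (A₀ w0)
  -- the key Fubini identity
  have hkeyid : ⟪A₀ P, P⟫ = 2 * ∫ τ in (0:ℝ)..t, ⟪A₀ (W τ), h τ⟫ :=
    key_identity A₀ hA₀sym t ht0 h hhint
  -- combine into a single integral
  have hsum : ⟪A₀ w0, P⟫ + (∫ τ in (0:ℝ)..t, ⟪A₀ (W τ), h τ⟫)
      = ∫ τ in (0:ℝ)..t, ⟪A₀ (x τ - y τ), h τ⟫ := by
    rw [← hcross, ← intervalIntegral.integral_add ia ib]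
    refine intervalIntegral.integral_congr fun τ hτ => ?_
    have hτ' : τ ∈ Icc (0:ℝ) t := by rwa [uIcc_of_le ht0] at hτ
    rw [hrep τ hτ', map_add, inner_add_left]
  -- nonpositivity of the integral
  have hnonpos : (∫ τ in (0:ℝ)..t, ⟪A₀ (x τ - y τ), h τ⟫) ≤ 0 := by
    rw [intervalIntegral.integral_of_le ht0]
    refine integral_nonpos_of_ae ?_
    exact ae_restrict_of_ae_restrict_of_subset hsub hae
  have hfin : x t - y t = w0 + P := hrep t ⟨ht0, le_rfl⟩
  rw [hfin, hexp]
  have : 2 * ⟪A₀ w0, P⟫ + ⟪A₀ P, P⟫ ≤ 0 := by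
    rw [hkeyid]
    have := hsum
    nlinarith [hnonpos, hsum]
  linarith
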